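/- Let G be a finite simple graph and let d ≥ 2 and l be integers with 1 ≤ l ≤ 2^{d−1}. Then G can be located on l columns in ℤ^d if and only if G is embeddable on l columns. -/

import Mathlib

open SimpleGraph

/-- Cast an integer grid point to a real point. -/
def castPt {d : ℕ} (p : Fin d → ℤ) : Fin d → ℝ := fun i => (p i : ℝ)

/-- The grid points lying on the closed segment in `ℝ^d` joining `a` and `b`. -/
def segGridPts {d : ℕ} (a b : Fin d → ℤ) : Set (Fin d → ℤ) :=
  {p | castPt p ∈ segment ℝ (castPt a) (castPt b)}

/-- `φ` is a grid drawing of `G` in `ℤ^d`: it is injective and no vertex image other than the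
endpoints lies on the closed segment representing an edge. -/
def IsGridDrawing {V : Type*} {d : ℕ} (G : SimpleGraph V) (φ : V → Fin d → ℤ) : Prop :=
  Function.Injective φ ∧
    ∀ u v w : V, G.Adj u v →
      castPt (φ w) ∈ segment ℝ (castPt (φ u)) (castPt (φ v)) → w = u ∨ w = v

/-- `G` is `q`-locatable in `ℤ^d`: it has a grid drawing in which every edge segment contains
at most `q` grid points. -/
def IsQLocatable {V : Type*} (G : SimpleGraph V) (d q : ℕ) : Prop :=
  ∃ φ : V → Fin d → ℤ, IsGridDrawing G φ ∧
    ∀ u v : V, G.Adj u v → (segGridPts (φ u) (φ v)).ncard ≤ q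

/-- A primitive grid drawing: every edge segment contains exactly its two endpoints
as grid points. -/
def IsPrimitiveDrawing {V : Type*} {d : ℕ} (G : SimpleGraph V) (φ : V → Fin d → ℤ) : Prop :=
  IsGridDrawing G φ ∧ ∀ u v : V, G.Adj u v → segGridPts (φ u) (φ v) = {φ u, φ v}

/-- `G` is locatable in `ℤ^d`: it has a primitive grid drawing in `ℤ^d`. -/
def IsLocatable {V : Type*} (G : SimpleGraph V) (d : ℕ) : Prop :=
  ∃ φ : V → Fin d → ℤ, IsPrimitiveDrawing G φ

/-- The rank of a grid point in `ℤ^d`: the tuple of its first `d - 1` coordinates. -/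
def rank {d : ℕ} (p : Fin d → ℤ) : Fin (d - 1) → ℤ :=
  fun i => p (Fin.castLE (Nat.sub_le d 1) i)

/-- `G` is embeddable on `l` columns: it has a grid drawing in `ℤ²` in which the first
coordinates of the vertex images take at most `l` distinct values. -/
def EmbeddableOnCols {V : Type*} (G : SimpleGraph V) (l : ℕ) : Prop :=
  ∃ φ : V → Fin 2 → ℤ, IsGridDrawing G φ ∧ (Set.range fun v => φ v 0).ncard ≤ l

/-- `G` can be located on `l` columns in `ℤ^d`: it has a primitive grid drawing in `ℤ^d`
using at most `l` columns. -/
def LocatableOnCols {V : Type*} (G : SimpleGraph V) (d l : ℕ) : Prop :=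
  ∃ φ : V → Fin d → ℤ, IsPrimitiveDrawing G φ ∧ (Set.range fun v => rank (φ v)).ncard ≤ l

/-- A linear forest: an acyclic graph with maximum degree at most two
(i.e. a disjoint union of paths). -/
def IsLinearForest {W : Type*} (H : SimpleGraph W) : Prop :=
  H.IsAcyclic ∧ ∀ v : W, {w | H.Adj v w}.ncard ≤ 2

lemma castPt_inj {d : ℕ} {p q : Fin d → ℤ} (h : castPt p = castPt q) : p = q := by
  funext j
  have := congrFun h j
  simpa [castPt] using this

lemma mem_seg_iff {d : ℕ} (a b p : Fin d → ℤ) :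
    castPt p ∈ segment ℝ (castPt a) (castPt b) ↔
      ∃ θ : ℝ, 0 ≤ θ ∧ θ ≤ 1 ∧ ∀ j, (p j : ℝ) = a j + θ * ((b j : ℝ) - a j) := by
  rw [segment_eq_image']
  constructor
  · rintro ⟨θ, ⟨h0, h1⟩, hθ⟩
    refine ⟨θ, h0, h1, fun j => ?_⟩
    have := congrFun hθ j
    simp [castPt] at this
    simp [castPt, ← this]
  · rintro ⟨θ, h0, h1, h⟩
    refine ⟨θ, ⟨h0, h1⟩, ?_⟩
    funext j
    have := h j
    simp [castPt, this]

lemma segGridPts_pair {d : ℕ} {a b : Fin d → ℤ} (i : Fin d)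
    (hi : b i - a i = 1 ∨ b i - a i = -1) : segGridPts a b = {a, b} := by
  ext p
  constructor
  · intro hp
    rw [segGridPts, Set.mem_setOf_eq, mem_seg_iff] at hp
    obtain ⟨θ, h0, h1, h⟩ := hp
    have hi' := h i
    -- θ * (b i - a i) = p i - a i, with b i - a i = ±1
    have hint : ∃ m : ℤ, θ = (m : ℝ) := by
      rcases hi with hc | hc
      · refine ⟨p i - a i, ?_⟩
        have : ((b i : ℝ) - a i) = 1 := by exact_mod_cast congrArg (fun z : ℤ => (z : ℝ)) hc
        push_cast
        rw [this] at hi'; linarith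
      · refine ⟨-(p i - a i), ?_⟩
        have : ((b i : ℝ) - a i) = -1 := by exact_mod_cast congrArg (fun z : ℤ => (z : ℝ)) hc
        push_cast
        rw [this] at hi'; linarith
    obtain ⟨m, rfl⟩ := hint
    have hm0 : (0:ℤ) ≤ m := by exact_mod_cast h0
    have hm1 : m ≤ 1 := by exact_mod_cast h1
    interval_cases m
    · left
      funext j
      have := h j
      simp at this
      exact_mod_cast this
    · right
      funext j
      have := h j
      simp at this
      exact_mod_cast this
  · intro hp
    rcases hp with rfl | hp
    · exact left_mem_segment ℝ _ _
    · rw [Set.mem_singleton_iff] at hp; subst hp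
      exact right_mem_segment ℝ _ _

/-- If two distinct points agree on all but one coordinate, and the grid points of their
segment are only the endpoints, then they differ by `±1` in that coordinate. -/
lemma lastdiff_of_pair {d : ℕ} {a b : Fin d → ℤ} (i : Fin d)
    (hpair : segGridPts a b = {a, b}) (hne : a ≠ b)
    (hagree : ∀ j, j ≠ i → a j = b j) :
    b i - a i = 1 ∨ b i - a i = -1 := by
  set m : ℤ := b i - a i with hm
  have hm0 : m ≠ 0 := by
    intro h0
    apply hne
    funext j
    by_cases hj : j = i
    · subst hj; omega
    · exact hagree j hj
  by_contra hcon
  push_neg at hcon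
  have habs : 2 ≤ |m| := by
    rcases hcon with ⟨h1, h2⟩
    rcases lt_trichotomy m 0 with h | h | h <;> rw [abs] <;> omega
  set p : Fin d → ℤ := Function.update a i (a i + m.sign) with hp
  have hpi : p i = a i + m.sign := by simp [hp]
  have hpj : ∀ j, j ≠ i → p j = a j := by
    intro j hj; simp [hp, Function.update_of_ne hj]
  have htri : m.sign = 1 ∨ m.sign = 0 ∨ m.sign = -1 := by
    rcases lt_trichotomy m 0 with h | h | h
    · right; right; exact Int.sign_eq_neg_one_iff_neg.mpr h
    · right; left; simp [h]
    · left; exact Int.sign_eq_one_iff_pos.mpr h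
  have hsgnmul := Int.sign_mul_abs m
  have hmem : p ∈ segGridPts a b := by
    rw [segGridPts, Set.mem_setOf_eq, mem_seg_iff]
    refine ⟨1 / ((|m| : ℤ) : ℝ), by positivity, ?_, ?_⟩
    · rw [div_le_one (by exact_mod_cast (by omega : (0:ℤ) < |m|))]
      exact_mod_cast (by omega : (1:ℤ) ≤ |m|)
    · intro j
      by_cases hj : j = i
      · subst hj
        rw [hpi]
        have hmr : ((b j : ℝ) - a j) = ((m : ℤ) : ℝ) := by rw [hm]; push_cast; ring
        have habsr : ((|m| : ℤ) : ℝ) ≠ 0 := by exact_mod_cast (by omega : (|m| : ℤ) ≠ 0)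
        have hsign : ((m.sign : ℤ) : ℝ) * ((|m| : ℤ) : ℝ) = ((m : ℤ) : ℝ) := by
          exact_mod_cast congrArg (fun z : ℤ => (z : ℝ)) hsgnmul
        rw [hmr]
        push_cast [Int.cast_abs] at hsign ⊢
        field_simp
        linarith [hsign]
      · rw [hpj j hj, hagree j hj]
        ring
  rw [hpair] at hmem
  rcases hmem with h | h
  · have hc := congrFun h i
    rw [hpi] at hc
    have hs0 : m.sign = 0 := by omega
    rw [Int.sign_eq_zero_iff_zero] at hs0
    exact hm0 hs0
  · rw [Set.mem_singleton_iff] at h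
    have hc := congrFun h i
    rw [hpi] at hc
    omega

open SimpleGraph


lemma gridDrawing_of_prim {V : Type*} {d : ℕ} {G : SimpleGraph V} {φ : V → Fin d → ℤ}
    (hinj : Function.Injective φ)
    (hprim : ∀ u v : V, G.Adj u v → segGridPts (φ u) (φ v) = {φ u, φ v}) :
    IsGridDrawing G φ := by
  refine ⟨hinj, fun u v w hadj hseg => ?_⟩
  have hw : φ w ∈ segGridPts (φ u) (φ v) := hseg
  rw [hprim u v hadj] at hw
  rcases hw with h | h
  · exact Or.inl (hinj h)
  · exact Or.inr (hinj h)

lemma embeddable_to_locatable {V : Type*} [Fintype V] (G : SimpleGraph V)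
    (d l : ℕ) (hd : 2 ≤ d) (hl2 : l ≤ 2 ^ (d - 1)) :
    EmbeddableOnCols G l → LocatableOnCols G d l := by
  classical
  rintro ⟨ψ, ⟨hinj, hdraw⟩, hcols⟩
  set X : Set ℤ := Set.range (fun v => ψ v 0) with hX
  have hXfin : X.Finite := Set.finite_range _
  set F : Finset ℤ := hXfin.toFinset with hF
  have hmemF : ∀ v : V, ψ v 0 ∈ F := by
    intro v
    rw [hF, Set.Finite.mem_toFinset]
    exact ⟨v, rfl⟩
  have hFcard : F.card ≤ 2 ^ (d - 1) := by
    rw [hF, ← Set.ncard_eq_toFinset_card X hXfin]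
    exact le_trans hcols hl2
  -- embed the columns into {0,1}^(d-1)
  have hemb : Nonempty (F ↪ (Fin (d - 1) → Bool)) := by
    rw [Function.Embedding.nonempty_iff_card_le]
    simpa using hFcard
  obtain ⟨e⟩ := hemb
  set colFn : ℤ → Fin (d - 1) → ℤ :=
    fun z i => if hz : z ∈ F then (if e ⟨z, hz⟩ i then 1 else 0) else 0 with hcolFn
  have hcol01 : ∀ z i, colFn z i = 0 ∨ colFn z i = 1 := by
    intro z i
    rw [hcolFn]
    dsimp only
    split_ifs <;> simp
  have hcolinj : ∀ z1 ∈ F, ∀ z2 ∈ F, colFn z1 = colFn z2 → z1 = z2 := by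
    intro z1 h1 z2 h2 h
    have : e ⟨z1, h1⟩ = e ⟨z2, h2⟩ := by
      funext i
      have hi := congrFun h i
      rw [hcolFn] at hi
      simp only [dif_pos h1, dif_pos h2] at hi
      by_cases hb1 : e ⟨z1, h1⟩ i <;> by_cases hb2 : e ⟨z2, h2⟩ i <;>
        simp [hb1, hb2] at hi ⊢
    have := e.injective this
    exact Subtype.mk_eq_mk.mp this
  -- heights
  set S : V → Finset V :=
    fun v => Finset.univ.filter (fun u => ψ u 0 = ψ v 0 ∧ ψ u 1 < ψ v 1) with hS
  set H : V → ℤ := fun v => ((S v).card : ℤ) with hH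
  have hH1 : ∀ u v : V, ψ u 0 = ψ v 0 → ψ u 1 < ψ v 1 → H u < H v := by
    intro u v hc hy
    have hss : S u ⊂ S v := by
      constructor
      · intro w hw
        rw [hS, Finset.mem_filter] at hw ⊢
        exact ⟨Finset.mem_univ w, hw.2.1.trans hc, hw.2.2.trans hy⟩
      · intro hsub
        have hu : u ∈ S v := by
          rw [hS, Finset.mem_filter]
          exact ⟨Finset.mem_univ u, hc, hy⟩
        have := hsub hu
        rw [hS, Finset.mem_filter] at this
        exact absurd this.2.2 (lt_irrefl _)
    have := Finset.card_lt_card hss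
    rw [hH]
    dsimp only
    exact_mod_cast this
  have hH2 : ∀ u v : V, G.Adj u v → ψ u 0 = ψ v 0 → ψ u 1 < ψ v 1 → H v = H u + 1 := by
    intro u v hadj hc hy
    have hset : S v = insert u (S u) := by
      ext w
      rw [hS, Finset.mem_insert, Finset.mem_filter, Finset.mem_filter]
      constructor
      · rintro ⟨-, hw0, hw1⟩
        rcases lt_trichotomy (ψ w 1) (ψ u 1) with h | h | h
        · exact Or.inr ⟨Finset.mem_univ w, hw0.trans hc.symm, h⟩
        · left
          apply hinj
          funext j
          fin_cases j
          · simpa using hw0.trans hc.symm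
          · simpa using h
        · -- w strictly between u and v on the segment: contradiction
          exfalso
          have hden : (0:ℝ) < ((ψ v 1 : ℝ) - (ψ u 1 : ℝ)) := by
            have : ψ u 1 < ψ v 1 := hy
            push_cast
            exact_mod_cast sub_pos.mpr (by exact_mod_cast this : (ψ u 1 : ℝ) < (ψ v 1 : ℝ))
          have hseg : castPt (ψ w) ∈ segment ℝ (castPt (ψ u)) (castPt (ψ v)) := by
            rw [mem_seg_iff]
            refine ⟨((ψ w 1 : ℝ) - (ψ u 1 : ℝ)) / ((ψ v 1 : ℝ) - (ψ u 1 : ℝ)), ?_, ?_, ?_⟩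
            · apply div_nonneg _ (le_of_lt hden)
              have : (ψ u 1 : ℝ) < (ψ w 1 : ℝ) := by exact_mod_cast h
              linarith
            · rw [div_le_one hden]
              have : (ψ w 1 : ℝ) < (ψ v 1 : ℝ) := by exact_mod_cast hw1
              linarith
            · intro j
              fin_cases j
              · have h0 : ψ w 0 = ψ u 0 := hw0.trans hc.symm
                have h0' : ψ v 0 = ψ u 0 := hc.symm
                show (ψ w 0 : ℝ) = (ψ u 0 : ℝ) +
                  ((ψ w 1 : ℝ) - (ψ u 1 : ℝ)) / ((ψ v 1 : ℝ) - (ψ u 1 : ℝ)) *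
                    ((ψ v 0 : ℝ) - (ψ u 0 : ℝ))
                rw [h0, h0']
                ring
              · show (ψ w 1 : ℝ) = (ψ u 1 : ℝ) +
                  ((ψ w 1 : ℝ) - (ψ u 1 : ℝ)) / ((ψ v 1 : ℝ) - (ψ u 1 : ℝ)) *
                    ((ψ v 1 : ℝ) - (ψ u 1 : ℝ))
                field_simp
                ring
          rcases hdraw u v w hadj hseg with rfl | rfl
          · exact absurd h (lt_irrefl _)
          · exact absurd hw1 (lt_irrefl _)
      · rintro (rfl | ⟨-, hw0, hw1⟩)
        · exact ⟨Finset.mem_univ _, hc, hy⟩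
        · exact ⟨Finset.mem_univ w, hw0.trans hc, hw1.trans hy⟩
    have hnotmem : u ∉ S u := by
      rw [hS, Finset.mem_filter]
      rintro ⟨-, -, h⟩
      exact absurd h (lt_irrefl _)
    rw [hH]
    simp only
    rw [hset, Finset.card_insert_of_notMem hnotmem]
    push_cast
    ring
  -- the drawing in ℤ^d
  have hd1 : d - 1 < d := by omega
  set lastI : Fin d := ⟨d - 1, hd1⟩ with hlastI
  set φ : V → Fin d → ℤ :=
    fun v j => if hj : (j : ℕ) < d - 1 then colFn (ψ v 0) ⟨j, hj⟩ else H v with hφ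
  have hrank : ∀ v, rank (φ v) = colFn (ψ v 0) := by
    intro v
    funext i
    rw [rank, hφ]
    simp only
    rw [dif_pos (by simpa using i.isLt)]
    congr 1
  have hlast : ∀ v, φ v lastI = H v := by
    intro v
    rw [hφ]
    simp only
    rw [dif_neg (by simp [hlastI])]
  have hother : ∀ j : Fin d, j ≠ lastI → (j : ℕ) < d - 1 := by
    intro j hj
    have := j.isLt
    have : (j : ℕ) ≠ d - 1 := fun h => hj (Fin.ext h)
    omega
  have hφinj : Function.Injective φ := by
    intro u v h
    have h1 : colFn (ψ u 0) = colFn (ψ v 0) := by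
      rw [← hrank u, ← hrank v, h]
    have hz : ψ u 0 = ψ v 0 := hcolinj _ (hmemF u) _ (hmemF v) h1
    have hHe : H u = H v := by
      have := congrFun h lastI
      rwa [hlast u, hlast v] at this
    have hy : ψ u 1 = ψ v 1 := by
      rcases lt_trichotomy (ψ u 1) (ψ v 1) with hlt | heq | hgt
      · exact absurd hHe (ne_of_lt (hH1 u v hz hlt))
      · exact heq
      · exact absurd hHe.symm (ne_of_lt (hH1 v u hz.symm hgt))
    apply hinj
    funext j
    fin_cases j
    · simpa using hz
    · simpa using hy
  have hprim : ∀ u v : V, G.Adj u v → segGridPts (φ u) (φ v) = {φ u, φ v} := by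
    intro u v hadj
    by_cases hc : ψ u 0 = ψ v 0
    · -- same column: vertical primitive edge
      have hagree : ∀ j : Fin d, j ≠ lastI → φ u j = φ v j := by
        intro j hj
        have hjlt := hother j hj
        rw [hφ]
        simp only
        rw [dif_pos hjlt, dif_pos hjlt, hc]
      have hyne : ψ u 1 ≠ ψ v 1 := by
        intro hy
        apply hadj.ne
        apply hinj
        funext j
        fin_cases j
        · simpa using hc
        · simpa using hy
      rcases lt_or_gt_of_ne hyne with hlt | hgt
      · have := hH2 u v hadj hc hlt
        apply segGridPts_pair lastI
        left
        rw [hlast u, hlast v]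
        omega
      · have := hH2 v u hadj.symm hc.symm hgt
        apply segGridPts_pair lastI
        right
        rw [hlast u, hlast v]
        omega
    · -- different columns
      have hne : colFn (ψ u 0) ≠ colFn (ψ v 0) := by
        intro h
        exact hc (hcolinj _ (hmemF u) _ (hmemF v) h)
      have : ∃ i, colFn (ψ u 0) i ≠ colFn (ψ v 0) i := by
        by_contra hcon
        push_neg at hcon
        exact hne (funext hcon)
      obtain ⟨i, hi⟩ := this
      have hj : ((Fin.castLE (Nat.sub_le d 1) i : Fin d) : ℕ) < d - 1 := by
        simpa using i.isLt
      apply segGridPts_pair (Fin.castLE (Nat.sub_le d 1) i)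
      have hu' : φ u (Fin.castLE (Nat.sub_le d 1) i) = colFn (ψ u 0) i := by
        rw [hφ]; simp only; rw [dif_pos hj]; congr 1
      have hv' : φ v (Fin.castLE (Nat.sub_le d 1) i) = colFn (ψ v 0) i := by
        rw [hφ]; simp only; rw [dif_pos hj]; congr 1
      rw [hu', hv']
      rcases hcol01 (ψ u 0) i with h1 | h1 <;> rcases hcol01 (ψ v 0) i with h2 | h2 <;>
        simp [h1, h2] at hi ⊢ <;> omega
  refine ⟨φ, ⟨gridDrawing_of_prim hφinj hprim, hprim⟩, ?_⟩
  have hre : (Set.range fun v => rank (φ v)) = colFn '' X := by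
    rw [hX]
    ext r
    constructor
    · rintro ⟨v, rfl⟩
      exact ⟨ψ v 0, ⟨v, rfl⟩, (hrank v).symm⟩
    · rintro ⟨z, ⟨v, rfl⟩, rfl⟩
      exact ⟨v, hrank v⟩
  rw [hre]
  exact le_trans (Set.ncard_image_le hXfin) hcols

lemma locatable_to_embeddable {V : Type*} [Fintype V] (G : SimpleGraph V)
    (d l : ℕ) (hd : 2 ≤ d) :
    LocatableOnCols G d l → EmbeddableOnCols G l := by
  classical
  rintro ⟨φ, ⟨⟨hinj, hdraw⟩, hprim⟩, hcols⟩
  have hd1 : d - 1 < d := by omega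
  set lastI : Fin d := ⟨d - 1, hd1⟩ with hlastI
  obtain ⟨enc, henc⟩ := Countable.exists_injective_nat (Fin (d - 1) → ℤ)
  set x : V → ℤ := fun v => (enc (rank (φ v)) : ℤ) with hx
  set h : V → ℤ := fun v => φ v lastI with hh
  set B : ℤ := 1 + ∑ t : V × V × V,
      |(h t.2.1 - h t.1) * (x t.2.2 - x t.1) - (h t.2.2 - h t.1) * (x t.2.1 - x t.1)| with hB
  clear_value B
  have hBpos : 0 < B := by
    rw [hB]
    have : (0:ℤ) ≤ ∑ t : V × V × V,
        |(h t.2.1 - h t.1) * (x t.2.2 - x t.1) - (h t.2.2 - h t.1) * (x t.2.1 - x t.1)| :=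
      Finset.sum_nonneg fun _ _ => abs_nonneg _
    omega
  have hBgt : ∀ u v w : V,
      |(h v - h u) * (x w - x u) - (h w - h u) * (x v - x u)| < B := by
    intro u v w
    have hle : |(h v - h u) * (x w - x u) - (h w - h u) * (x v - x u)| ≤
        ∑ t : V × V × V,
          |(h t.2.1 - h t.1) * (x t.2.2 - x t.1) - (h t.2.2 - h t.1) * (x t.2.1 - x t.1)| := by
      have := Finset.single_le_sum
        (f := fun t : V × V × V =>
          |(h t.2.1 - h t.1) * (x t.2.2 - x t.1) - (h t.2.2 - h t.1) * (x t.2.1 - x t.1)|)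
        (fun _ _ => abs_nonneg _) (Finset.mem_univ (u, v, w))
      simpa using this
    omega
  set ψ : V → Fin 2 → ℤ := fun v => ![x v, h v + B * x v ^ 2] with hψ
  have hψ0 : ∀ v, ψ v 0 = x v := fun v => rfl
  have hψ1 : ∀ v, ψ v 1 = h v + B * x v ^ 2 := fun v => rfl
  -- x determines the rank
  have hxrank : ∀ u v : V, x u = x v → rank (φ u) = rank (φ v) := by
    intro u v hxe
    apply henc
    rw [hx] at hxe
    dsimp only at hxe
    exact_mod_cast hxe
  -- rank equality means agreeing off the last coordinate
  have hagree : ∀ u v : V, rank (φ u) = rank (φ v) →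
      ∀ j : Fin d, j ≠ lastI → φ u j = φ v j := by
    intro u v hr j hj
    have hjlt : (j : ℕ) < d - 1 := by
      have := j.isLt
      have : (j : ℕ) ≠ d - 1 := fun hc => hj (Fin.ext hc)
      omega
    have := congrFun hr ⟨(j : ℕ), hjlt⟩
    rw [rank, rank] at this
    simpa [Fin.ext_iff] using this
  -- injectivity of ψ
  have hψinj : Function.Injective ψ := by
    intro u v heq
    have hxe : x u = x v := by rw [← hψ0 u, ← hψ0 v, heq]
    have hye : h u + B * x u ^ 2 = h v + B * x v ^ 2 := by
      rw [← hψ1 u, ← hψ1 v, heq]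
    have hhe : h u = h v := by rw [hxe] at hye; omega
    apply hinj
    funext j
    by_cases hj : j = lastI
    · subst hj
      exact hhe
    · exact hagree u v (hxrank u v hxe) j hj
  -- same-column edges have height difference ±1
  have hsame : ∀ u v : V, G.Adj u v → x u = x v → h v - h u = 1 ∨ h v - h u = -1 := by
    intro u v hadj hxe
    have hne : φ u ≠ φ v := fun hc => hadj.ne (hinj hc)
    exact lastdiff_of_pair lastI (hprim u v hadj) hne
      (hagree u v (hxrank u v hxe))
  refine ⟨ψ, ⟨hψinj, ?_⟩, ?_⟩
  · -- no vertex on an edge segment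
    intro u v w hadj hseg
    by_cases hxc : x u = x v
    · -- vertical edge of unit length
      have hdiff : ψ v 1 - ψ u 1 = 1 ∨ ψ v 1 - ψ u 1 = -1 := by
        rw [hψ1 u, hψ1 v, hxc]
        rcases hsame u v hadj hxc with h1 | h1
        · left; omega
        · right; omega
      have hpair := segGridPts_pair (a := ψ u) (b := ψ v) 1 hdiff
      have hw : ψ w ∈ segGridPts (ψ u) (ψ v) := hseg
      rw [hpair] at hw
      rcases hw with hw | hw
      · exact Or.inl (hψinj hw)
      · exact Or.inr (hψinj hw)
    · rw [mem_seg_iff] at hseg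
      obtain ⟨θ, h0, h1, hco⟩ := hseg
      have hco0 : (x w : ℝ) = x u + θ * ((x v : ℝ) - x u) := by
        have := hco 0
        simpa [hψ] using this
      have hco1 : ((h w + B * x w ^ 2 : ℤ) : ℝ) =
          ((h u + B * x u ^ 2 : ℤ) : ℝ) +
            θ * (((h v + B * x v ^ 2 : ℤ) : ℝ) - ((h u + B * x u ^ 2 : ℤ) : ℝ)) := by
        have := hco 1
        simpa [hψ] using this
      have hxvur : ((x v : ℝ)) - (x u : ℝ) ≠ 0 := by
        intro hc
        apply hxc
        have : (x u : ℝ) = x v := by linarith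
        exact_mod_cast this
      by_cases hwu : x w = x u
      · -- θ = 0, so w = u
        left
        have hθ0 : θ = 0 := by
          rw [hwu] at hco0
          push_cast at hco0
          rcases mul_eq_zero.mp (by linarith : θ * ((x v : ℝ) - x u) = 0) with hc | hc
          · exact hc
          · exact absurd hc hxvur
        apply hψinj
        funext j
        have := hco j
        rw [hθ0] at this
        simp only [zero_mul, add_zero] at this
        exact_mod_cast this
      · by_cases hwv : x w = x v
        · -- θ = 1, so w = v
          right
          have hθ1 : θ = 1 := by
            rw [hwv] at hco0
            have : (1 - θ) * ((x v : ℝ) - x u) = 0 := by linarith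
            rcases mul_eq_zero.mp this with hc | hc
            · linarith
            · exact absurd hc hxvur
          apply hψinj
          funext j
          have := hco j
          rw [hθ1] at this
          have : ((ψ w j : ℤ) : ℝ) = ψ v j := by linarith
          exact_mod_cast this
        · -- all three columns distinct: impossible by choice of B
          exfalso
          have hZr : ((h v + B * x v ^ 2 : ℤ) : ℝ) * ((x w : ℝ) - x u) -
              ((h w + B * x w ^ 2 : ℤ) : ℝ) * ((x v : ℝ) - x u) -
              (((h u + B * x u ^ 2 : ℤ) : ℝ) * ((x w : ℝ) - x u) -
                ((h u + B * x u ^ 2 : ℤ) : ℝ) * ((x v : ℝ) - x u)) = 0 := by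
            have e1 : (x w : ℝ) - x u = θ * ((x v : ℝ) - x u) := by linarith
            have e2 : ((h w + B * x w ^ 2 : ℤ) : ℝ) - ((h u + B * x u ^ 2 : ℤ) : ℝ) =
                θ * (((h v + B * x v ^ 2 : ℤ) : ℝ) - ((h u + B * x u ^ 2 : ℤ) : ℝ)) := by
              linarith
            linear_combination
              (((h v + B * x v ^ 2 : ℤ) : ℝ) - ((h u + B * x u ^ 2 : ℤ) : ℝ)) * e1 -
                (((x v : ℤ) : ℝ) - ((x u : ℤ) : ℝ)) * e2
          have hZ : (h v + B * x v ^ 2) * (x w - x u) -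
              (h w + B * x w ^ 2) * (x v - x u) -
              ((h u + B * x u ^ 2) * (x w - x u) - (h u + B * x u ^ 2) * (x v - x u)) = 0 := by
            exact_mod_cast hZr
          have hkey : (h v - h u) * (x w - x u) - (h w - h u) * (x v - x u) +
              B * ((x v - x u) * (x w - x u) * (x v - x w)) = 0 := by linear_combination hZ
          have hP1 : x v - x u ≠ 0 := fun hc => hxc (by omega)
          have hP2 : x w - x u ≠ 0 := fun hc => hwu (by omega)
          have hP3 : x v - x w ≠ 0 := fun hc => hwv (by omega)
          have hPabs : 1 ≤ |(x v - x u) * (x w - x u) * (x v - x w)| := by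
            exact Int.one_le_abs (mul_ne_zero (mul_ne_zero hP1 hP2) hP3)
          have hBP : B ≤ |B * ((x v - x u) * (x w - x u) * (x v - x w))| := by
            rw [abs_mul, abs_of_pos hBpos]
            nlinarith
          have hLB := hBgt u v w
          have hLeq : |(h v - h u) * (x w - x u) - (h w - h u) * (x v - x u)| =
              |B * ((x v - x u) * (x w - x u) * (x v - x w))| := by
            rw [show (h v - h u) * (x w - x u) - (h w - h u) * (x v - x u) =
              -(B * ((x v - x u) * (x w - x u) * (x v - x w))) by linarith, abs_neg]
          linarith [hLeq, hBP, hLB]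
  · -- at most l columns
    have hre : (Set.range fun v => ψ v 0) =
        (fun r => ((enc r : ℕ) : ℤ)) '' (Set.range fun v => rank (φ v)) := by
      ext z
      constructor
      · rintro ⟨v, rfl⟩
        exact ⟨rank (φ v), ⟨v, rfl⟩, rfl⟩
      · rintro ⟨r, ⟨v, rfl⟩, rfl⟩
        exact ⟨v, rfl⟩
    rw [hre]
    exact le_trans (Set.ncard_image_le (Set.finite_range _)) hcols

theorem locatableOnCols_iff_embeddableOnCols {V : Type*} [Fintype V] (G : SimpleGraph V)
    (d l : ℕ) (hd : 2 ≤ d) (hl1 : 1 ≤ l) (hl2 : l ≤ 2 ^ (d - 1)) :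
    LocatableOnCols G d l ↔ EmbeddableOnCols G l :=
  ⟨locatable_to_embeddable G d l hd, embeddable_to_locatable G d l hd hl2⟩
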